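/- Let h : X₁^OTW → X₂^OTW be a conjugacy between OTW-subshifts. Then h restricts to a bijection X₁ → X₂ between the underlying subshifts, and the map h̄ : 𝒰₁ → 𝒰₂ given by h̄(A) = h(A) is an isomorphism of Boolean algebras. -/

import Mathlib

open Set

section Subshift

variable {A : Type*}

/-- The word `w` occurs as a block of `x` at position `i`. -/
def IsBlockAt (x : ℕ → A) (w : List A) (i : ℕ) : Prop :=
  ∀ j, ∀ _ : j < w.length, x (i + j) = w[j]

/-- The subshift `X_F ⊆ 𝒜^ℕ` determined by the set `F` of forbidden words. -/
def SubshiftOf (F : Set (List A)) : Set (ℕ → A) :=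
  {x | ∀ w ∈ F, ∀ i, ¬ IsBlockAt x w i}

/-- The language of the subshift: all finite words occurring in some element of `X_F`. -/
def Lang (F : Set (List A)) : Set (List A) :=
  {w | ∃ x ∈ SubshiftOf F, ∃ i, IsBlockAt x w i}

/-- Concatenation of a finite word with an infinite sequence. -/
def wcat (w : List A) (x : ℕ → A) : ℕ → A := fun n =>
  if h : n < w.length then w[n] else x (n - w.length)

/-- `C(α,β) = {β x ∈ X : α x ∈ X}`. -/
def Cset (F : Set (List A)) (α β : List A) : Set (ℕ → A) :=
  {y | ∃ x : ℕ → A, y = wcat β x ∧ wcat β x ∈ SubshiftOf F ∧ wcat α x ∈ SubshiftOf F}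

/-- The cylinder set `Z_β = C(ω,β)`. -/
def Zcyl (F : Set (List A)) (β : List A) : Set (ℕ → A) := Cset F [] β

/-- The follower set `F_α = C(α,ω)`. -/
def Fol (F : Set (List A)) (α : List A) : Set (ℕ → A) := Cset F α []

/-- The relative range `r(S,w) = {x ∈ X : w x ∈ S}`. -/
def relRange (F : Set (List A)) (S : Set (ℕ → A)) (w : List A) : Set (ℕ → A) :=
  {x | x ∈ SubshiftOf F ∧ wcat w x ∈ S}

/-- Membership in the Boolean algebra `𝒰` of subsets of `X` generated by the sets
`C(α,β)`, `α, β ∈ L_X`: closed under finite unions, finite intersections and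
complements in `X`. -/
inductive InU (F : Set (List A)) : Set (ℕ → A) → Prop
  | base {α β : List A} (hα : α ∈ Lang F) (hβ : β ∈ Lang F) : InU F (Cset F α β)
  | union {S T : Set (ℕ → A)} : InU F S → InU F T → InU F (S ∪ T)
  | inter {S T : Set (ℕ → A)} : InU F S → InU F T → InU F (S ∩ T)
  | compl {S : Set (ℕ → A)} : InU F S → InU F (SubshiftOf F \ S)

/-- `αβ⁻¹` is in reduced form in the free group on the alphabet:
`α` and `β` do not end in the same letter. -/
def ReducedPair (α β : List A) : Prop :=
  ¬ ∃ c : A, α.getLast? = some c ∧ β.getLast? = some c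

/-- Ultrafilters (= prime filters) of the Boolean algebra `𝒰`. -/
structure UltraU (F : Set (List A)) where
  sets : Set (Set (ℕ → A))
  mem_inU : ∀ S ∈ sets, InU F S
  nonempty : sets.Nonempty
  empty_not_mem : ∅ ∉ sets
  inter_mem : ∀ S ∈ sets, ∀ T ∈ sets, S ∩ T ∈ sets
  superset_mem : ∀ S ∈ sets, ∀ T : Set (ℕ → A), InU F T → S ⊆ T → T ∈ sets
  prime : ∀ S T : Set (ℕ → A), InU F S → InU F T → S ∪ T ∈ sets → S ∈ sets ∨ T ∈ sets

/-- The basic (compact) open set `O_S = {ξ ∈ 𝒰̂ : S ∈ ξ}` of the Stone dual `𝒰̂`. -/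
def Oset (F : Set (List A)) (S : Set (ℕ → A)) : Set (UltraU F) := {ξ | S ∈ ξ.sets}

/-- The Stone topology on `𝒰̂`. -/
instance (F : Set (List A)) : TopologicalSpace (UltraU F) :=
  TopologicalSpace.generateFrom {V | ∃ S : Set (ℕ → A), InU F S ∧ V = Oset F S}

/-- The graph of the partially defined map `σ̂` on `𝒰̂`:
`sigmaHatRel F ξ η` holds iff `ξ ∈ dom σ̂` and `η = σ̂(ξ)`. -/
def sigmaHatRel (F : Set (List A)) (ξ η : UltraU F) : Prop :=
  ∃ a : A, Zcyl F [a] ∈ ξ.sets ∧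
    η.sets = {B : Set (ℕ → A) | InU F B ∧ ∃ S ∈ ξ.sets, relRange F S [a] ⊆ B}

/- The OTW subshift, modelled inside `ℕ → Option A`; a finite word corresponds to a
sequence that is eventually `none` (`none` playing the role of the symbol `∞`). -/

/-- The shift map, deleting the first letter (it sends sequences of length `≤ 1`
to the empty sequence). -/
def shiftO (y : ℕ → Option A) : ℕ → Option A := fun i => y (i + 1)

/-- An infinite sequence, as an element of the OTW model. -/
def ofSeq (x : ℕ → A) : ℕ → Option A := fun i => some (x i)

/-- A finite word, as an element of the OTW model. -/
def ofWord (w : List A) : ℕ → Option A := fun i =>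
  if h : i < w.length then some w[i] else none

/-- Concatenation of a finite word with an element of the OTW model. -/
def wcatO (w : List A) (y : ℕ → Option A) : ℕ → Option A := fun n =>
  if h : n < w.length then some w[n] else y (n - w.length)

/-- The finite words belonging to `X^fin`: those `w` for which there are infinitely many
letters `a` such that `w a y ∈ X^inf` for some `y`. -/
def XFin (F : Set (List A)) : Set (List A) :=
  {w | {a : A | ∃ y : ℕ → A, wcat (w ++ [a]) y ∈ SubshiftOf F}.Infinite}

/-- The OTW subshift `X^OTW = X^inf ∪ X^fin`. -/
def OTW (F : Set (List A)) : Set (ℕ → Option A) :=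
  ofSeq '' SubshiftOf F ∪ ofWord '' XFin F

theorem ofSeq_mem_OTW {F : Set (List A)} {x : ℕ → A} (hx : x ∈ SubshiftOf F) :
    ofSeq x ∈ OTW F := Or.inl ⟨x, hx, rfl⟩

theorem ofWord_mem_OTW {F : Set (List A)} {w : List A} (hw : w ∈ XFin F) :
    ofWord w ∈ OTW F := Or.inr ⟨w, hw, rfl⟩

/-- The generalised cylinder `𝒵(w,F') = {y ∈ X^OTW : y` begins with `w`, and the next
letter of `y` is not in `F'}`. -/
def genCyl (F : Set (List A)) (w : List A) (F' : Set A) : Set (ℕ → Option A) :=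
  {y | y ∈ OTW F ∧ (∀ j, ∀ _ : j < w.length, y j = some w[j]) ∧
    ∀ a ∈ F', y w.length ≠ some a}

/-- The follower set `ℱ(w) = {y ∈ X^OTW : w y ∈ X^OTW}` in the OTW subshift. -/
def folO (F : Set (List A)) (w : List A) : Set (ℕ → Option A) :=
  {y | y ∈ OTW F ∧ wcatO w y ∈ OTW F}

/-- The topology on `X^OTW`, generated by the generalised cylinders. -/
instance (F : Set (List A)) : TopologicalSpace ↥(OTW F) :=
  TopologicalSpace.generateFrom
    {V | ∃ w ∈ Lang F, ∃ F' : Set A, F'.Finite ∧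
      V = {y : ↥(OTW F) | (y : ℕ → Option A) ∈ genCyl F w F'}}

/-- The graph of the map `π : 𝒰̂ → X^OTW`: `piRel F ξ y` holds iff `π(ξ) = y`.
(`y` begins with a nonempty word `w` iff `Z_w ∈ ξ`.) -/
def piRel (F : Set (List A)) (ξ : UltraU F) (y : ℕ → Option A) : Prop :=
  (∀ i, y i = none → y (i + 1) = none) ∧
  ∀ w : List A, w ≠ [] →
    ((∀ j, ∀ _ : j < w.length, y j = some w[j]) ↔ Zcyl F w ∈ ξ.sets)

end Subshift

section Conjugacy

variable {A₁ A₂ : Type*}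

/-- `h` commutes with the shift maps. -/
def ShiftCommuting (F₁ : Set (List A₁)) (F₂ : Set (List A₂))
    (h : ↥(OTW F₁) → ↥(OTW F₂)) : Prop :=
  ∀ (y : ↥(OTW F₁)) (hy : shiftO (y : ℕ → Option A₁) ∈ OTW F₁),
    (h ⟨shiftO (y : ℕ → Option A₁), hy⟩ : ℕ → Option A₂) =
      shiftO ((h y : ℕ → Option A₂))

/-- `h` is length-preserving: `h y` and `y` have the same length, i.e. the same
positions where the symbol `∞` (here `none`) occurs. -/
def LengthPreserving (F₁ : Set (List A₁)) (F₂ : Set (List A₂))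
    (h : ↥(OTW F₁) → ↥(OTW F₂)) : Prop :=
  ∀ (y : ↥(OTW F₁)) (i : ℕ),
    ((h y : ℕ → Option A₂) i = none ↔ (y : ℕ → Option A₁) i = none)

/-- A conjugacy of OTW subshifts: a homeomorphism commuting with the shifts and
preserving lengths. -/
def IsConjugacy (F₁ : Set (List A₁)) (F₂ : Set (List A₂))
    (h : ↥(OTW F₁) ≃ₜ ↥(OTW F₂)) : Prop :=
  ShiftCommuting F₁ F₂ ⇑h ∧ LengthPreserving F₁ F₂ ⇑h

/-- The image `h̄(S) = h(S)` of a subset `S ⊆ X₁` under (the restriction to `X₁` of)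
a map `h : X₁^OTW → X₂^OTW`. -/
def hbar (F₁ : Set (List A₁)) (F₂ : Set (List A₂))
    (h : ↥(OTW F₁) → ↥(OTW F₂)) (S : Set (ℕ → A₁)) : Set (ℕ → A₂) :=
  {z | ∃ y : ↥(OTW F₁), (y : ℕ → Option A₁) ∈ ofSeq '' S ∧
    ofSeq z = (h y : ℕ → Option A₂)}

end Conjugacy


section Lib1

variable {A : Type*}

/-- `z` starts with the word `w`. -/
def StartsWith (w : List A) (z : ℕ → A) : Prop :=
  ∀ j, ∀ _ : j < w.length, z j = w[j]

/-- drop the first `n` letters of a sequence. -/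
def sseq (n : ℕ) (z : ℕ → A) : ℕ → A := fun i => z (n + i)

lemma sseq_zero (z : ℕ → A) : sseq 0 z = z := by
  funext i; simp [sseq]

lemma sseq_sseq (n m : ℕ) (z : ℕ → A) : sseq m (sseq n z) = sseq (n + m) z := by
  funext i; simp [sseq, Nat.add_assoc]

lemma wcat_lt (w : List A) (x : ℕ → A) {n : ℕ} (h : n < w.length) :
    wcat w x n = w[n] := by simp [wcat, h]

lemma wcat_ge (w : List A) (x : ℕ → A) {n : ℕ} (h : w.length ≤ n) :
    wcat w x n = x (n - w.length) := by
  have : ¬ n < w.length := by omega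
  simp [wcat, this]

lemma sseq_wcat (w : List A) (x : ℕ → A) : sseq w.length (wcat w x) = x := by
  funext i
  have h : w.length ≤ w.length + i := by omega
  simp [sseq, wcat_ge w x h]

lemma wcat_nil (x : ℕ → A) : wcat ([] : List A) x = x := by
  funext i; simp [wcat]

lemma wcat_append (u v : List A) (x : ℕ → A) :
    wcat (u ++ v) x = wcat u (wcat v x) := by
  funext i
  rcases lt_or_ge i u.length with hi | hi
  · rw [wcat_lt u _ hi, wcat_lt (u ++ v) x (by simp; omega)]
    simp [List.getElem_append, hi]
  · rw [wcat_ge u _ hi]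
    rcases lt_or_ge i (u.length + v.length) with h2 | h2
    · rw [wcat_lt (u ++ v) x (by simp; omega), wcat_lt v _ (by omega)]
      have hni : ¬ i < u.length := by omega
      simp [List.getElem_append, hni]
    · rw [wcat_ge (u ++ v) x (by simp; omega), wcat_ge v _ (by omega)]
      congr 1
      simp; omega

lemma startsWith_wcat (w : List A) (x : ℕ → A) : StartsWith w (wcat w x) := by
  intro j hj; exact wcat_lt w x hj

lemma wcat_eq_self {w : List A} {z : ℕ → A} (h : StartsWith w z) :
    wcat w (sseq w.length z) = z := by
  funext i
  rcases lt_or_ge i w.length with hi | hi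
  · rw [wcat_lt w _ hi]; exact (h i hi).symm
  · rw [wcat_ge w _ hi]; simp [sseq]; congr 1; omega

lemma startsWith_append {u v : List A} {z : ℕ → A} :
    StartsWith (u ++ v) z ↔ StartsWith u z ∧ StartsWith v (sseq u.length z) := by
  constructor
  · intro h
    refine ⟨fun j hj => ?_, fun j hj => ?_⟩
    · rw [h j (by simp; omega)]
      simp [List.getElem_append, hj]
    · have := h (u.length + j) (by simp; omega)
      have hn : ¬ u.length + j < u.length := by omega
      simp only [List.getElem_append, hn, dite_false] at this
      simpa [sseq, Nat.add_sub_cancel_left] using this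
  · rintro ⟨h1, h2⟩ j hj
    rcases lt_or_ge j u.length with hju | hju
    · rw [h1 j hju]; simp [List.getElem_append, hju]
    · have := h2 (j - u.length) (by simp at hj ⊢; omega)
      have hn : ¬ j < u.length := by omega
      simp only [List.getElem_append, hn, dite_false]
      simpa [sseq, Nat.add_sub_cancel' hju] using this

lemma wcat_inj {w : List A} {x x' : ℕ → A} (h : wcat w x = wcat w x') : x = x' := by
  have := congrArg (sseq w.length) h
  rwa [sseq_wcat, sseq_wcat] at this

/-- membership in the subshift is preserved under removing a prefix. -/
lemma mem_shift {F : Set (List A)} {w : List A} {x : ℕ → A}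
    (h : wcat w x ∈ SubshiftOf F) : x ∈ SubshiftOf F := by
  intro u hu i hblock
  apply h u hu (w.length + i)
  intro j hj
  have : w.length ≤ w.length + i + j := by omega
  rw [wcat_ge w x this]
  have : w.length + i + j - w.length = i + j := by omega
  rw [this]
  exact hblock j hj

lemma sseq_mem {F : Set (List A)} {x : ℕ → A} (h : x ∈ SubshiftOf F) (n : ℕ) :
    sseq n x ∈ SubshiftOf F := by
  intro u hu i hblock
  apply h u hu (n + i)
  intro j hj
  have : n + i + j = n + (i + j) := by omega
  rw [this]
  exact hblock j hj

lemma startsWith_mem_lang {F : Set (List A)} {w : List A} {z : ℕ → A}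
    (hz : z ∈ SubshiftOf F) (h : StartsWith w z) : w ∈ Lang F :=
  ⟨z, hz, 0, fun j hj => by simpa using h j hj⟩

lemma wcat_mem_lang {F : Set (List A)} {w : List A} {x : ℕ → A}
    (h : wcat w x ∈ SubshiftOf F) : w ∈ Lang F :=
  startsWith_mem_lang h (startsWith_wcat w x)

lemma lang_take {F : Set (List A)} {w : List A} (h : w ∈ Lang F) (n : ℕ) :
    w.take n ∈ Lang F := by
  obtain ⟨x, hx, i, hb⟩ := h
  refine ⟨x, hx, i, fun j hj => ?_⟩
  have hj' : j < w.length := by simp at hj; omega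
  rw [hb j hj']
  simp

lemma lang_drop {F : Set (List A)} {w : List A} (h : w ∈ Lang F) (n : ℕ) :
    w.drop n ∈ Lang F := by
  obtain ⟨x, hx, i, hb⟩ := h
  refine ⟨x, hx, i + n, fun j hj => ?_⟩
  have hj' : n + j < w.length := by simp at hj; omega
  have := hb (n + j) hj'
  rw [List.getElem_drop]
  rw [← this]
  congr 1
  omega

lemma lang_nil {F : Set (List A)} {w : List A} (h : w ∈ Lang F) : ([] : List A) ∈ Lang F := by
  simpa using lang_take h 0

lemma lang_nonemptyX {F : Set (List A)} {w : List A} (h : w ∈ Lang F) :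
    ∃ x, x ∈ SubshiftOf F := by
  obtain ⟨x, hx, _⟩ := h
  exact ⟨x, hx⟩

lemma nonemptyX_lang_nil {F : Set (List A)} {x : ℕ → A} (hx : x ∈ SubshiftOf F) :
    ([] : List A) ∈ Lang F :=
  ⟨x, hx, 0, fun j hj => by simp at hj⟩

end Lib1
section Lib2

variable {A : Type*}

lemma mem_Cset {F : Set (List A)} {α β : List A} {z : ℕ → A} :
    z ∈ Cset F α β ↔
      z ∈ SubshiftOf F ∧ StartsWith β z ∧ wcat α (sseq β.length z) ∈ SubshiftOf F := by
  constructor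
  · rintro ⟨x, rfl, h1, h2⟩
    refine ⟨h1, startsWith_wcat β x, ?_⟩
    rwa [sseq_wcat]
  · rintro ⟨h1, h2, h3⟩
    exact ⟨sseq β.length z, (wcat_eq_self h2).symm, by rwa [wcat_eq_self h2], h3⟩

lemma Cset_subset {F : Set (List A)} {α β : List A} : Cset F α β ⊆ SubshiftOf F :=
  fun _ hz => (mem_Cset.mp hz).1

lemma mem_Zcyl {F : Set (List A)} {w : List A} {z : ℕ → A} :
    z ∈ Zcyl F w ↔ z ∈ SubshiftOf F ∧ StartsWith w z := by
  rw [Zcyl, mem_Cset]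
  constructor
  · rintro ⟨h1, h2, _⟩; exact ⟨h1, h2⟩
  · rintro ⟨h1, h2⟩
    exact ⟨h1, h2, by rw [wcat_nil]; exact sseq_mem h1 _⟩

lemma Cset_eq_empty_left {F : Set (List A)} {α β : List A} (h : α ∉ Lang F) :
    Cset F α β = ∅ := by
  ext z
  simp only [Set.mem_empty_iff_false, iff_false]
  intro hz
  exact h (wcat_mem_lang (mem_Cset.mp hz).2.2)

lemma Cset_eq_empty_right {F : Set (List A)} {α β : List A} (h : β ∉ Lang F) :
    Cset F α β = ∅ := by
  ext z
  simp only [Set.mem_empty_iff_false, iff_false]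
  intro hz
  exact h (startsWith_mem_lang (mem_Cset.mp hz).1 (mem_Cset.mp hz).2.1)

lemma InU_subset {F : Set (List A)} {S : Set (ℕ → A)} (h : InU F S) :
    S ⊆ SubshiftOf F := by
  induction h with
  | base hα hβ => exact Cset_subset
  | union _ _ ih1 ih2 => exact Set.union_subset ih1 ih2
  | inter _ _ ih1 ih2 => exact subset_trans Set.inter_subset_left ih1
  | compl _ _ => exact Set.diff_subset

lemma InU_lang_nil {F : Set (List A)} {S : Set (ℕ → A)} (h : InU F S) :
    ([] : List A) ∈ Lang F := by
  induction h with
  | base hα hβ => exact lang_nil hα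
  | union _ _ ih1 _ => exact ih1
  | inter _ _ ih1 _ => exact ih1
  | compl _ ih => exact ih

lemma Cset_nil_nil {F : Set (List A)} : Cset F ([] : List A) [] = SubshiftOf F := by
  ext z
  rw [mem_Cset]
  simp only [List.length_nil, wcat_nil]
  constructor
  · rintro ⟨h, _, _⟩; exact h
  · intro h
    exact ⟨h, fun j hj => by simp at hj, by rw [sseq_zero]; exact h⟩

lemma InU_univ {F : Set (List A)} (h : ([] : List A) ∈ Lang F) :
    InU F (SubshiftOf F) := by
  rw [← Cset_nil_nil]; exact InU.base h h

lemma InU_empty {F : Set (List A)} (h : ([] : List A) ∈ Lang F) :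
    InU F (∅ : Set (ℕ → A)) := by
  have := InU.compl (InU_univ h)
  simpa using this

lemma InU_Zcyl {F : Set (List A)} {w : List A} (h : ([] : List A) ∈ Lang F) :
    InU F (Zcyl F w) := by
  by_cases hw : w ∈ Lang F
  · exact InU.base h hw
  · rw [Zcyl, Cset_eq_empty_right hw]; exact InU_empty h

/-- finite unions of cylinders over a finset of letters -/
lemma InU_biUnion_Zcyl {F : Set (List A)} {w : List A} (h : ([] : List A) ∈ Lang F)
    (G : Finset A) : InU F (⋃ a ∈ G, Zcyl F (w ++ [a])) := by
  classical
  induction G using Finset.induction with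
  | empty => simpa using InU_empty h
  | insert _ _ hx ih =>
    rw [Finset.set_biUnion_insert]
    exact InU.union (InU_Zcyl h) ih

/-- The set `Z_w ∖ ⋃_{a ∈ G} Z_{wa}`. -/
def Dset (F : Set (List A)) (w : List A) (G : Finset A) : Set (ℕ → A) :=
  Zcyl F w \ ⋃ a ∈ G, Zcyl F (w ++ [a])

lemma startsWith_snoc {w : List A} {a : A} {z : ℕ → A} :
    StartsWith (w ++ [a]) z ↔ StartsWith w z ∧ z w.length = a := by
  rw [startsWith_append]
  constructor
  · rintro ⟨h1, h2⟩
    exact ⟨h1, by simpa [sseq] using h2 0 (by simp)⟩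
  · rintro ⟨h1, h2⟩
    refine ⟨h1, fun j hj => ?_⟩
    simp at hj
    subst hj
    simpa [sseq] using h2

lemma mem_Dset {F : Set (List A)} {w : List A} {G : Finset A} {z : ℕ → A} :
    z ∈ Dset F w G ↔
      z ∈ SubshiftOf F ∧ StartsWith w z ∧ ∀ a ∈ G, z w.length ≠ a := by
  simp only [Dset, Set.mem_diff, mem_Zcyl, Set.mem_iUnion, not_exists]
  constructor
  · rintro ⟨⟨h1, h2⟩, h3⟩
    refine ⟨h1, h2, fun a ha hz => ?_⟩
    exact h3 a ha ⟨h1, startsWith_snoc.mpr ⟨h2, hz⟩⟩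
  · rintro ⟨h1, h2, h3⟩
    refine ⟨⟨h1, h2⟩, fun a ha hmem => ?_⟩
    exact h3 a ha (startsWith_snoc.mp hmem.2).2

lemma InU_Dset {F : Set (List A)} {w : List A} (hw : w ∈ Lang F) (G : Finset A) :
    InU F (Dset F w G) := by
  have hnil := lang_nil hw
  have : Dset F w G = Zcyl F w ∩ (SubshiftOf F \ ⋃ a ∈ G, Zcyl F (w ++ [a])) := by
    ext z
    simp only [Dset, Set.mem_diff, Set.mem_inter_iff]
    constructor
    · rintro ⟨h1, h2⟩; exact ⟨h1, (mem_Zcyl.mp h1).1, h2⟩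
    · rintro ⟨h1, _, h2⟩; exact ⟨h1, h2⟩
  rw [this]
  exact InU.inter (InU.base hnil hw) (InU.compl (InU_biUnion_Zcyl hnil G))

end Lib2
section Lib3

variable {A : Type*}

/-- Prepending the word `u` (within the subshift): `T_u(S) = {u x ∈ X : x ∈ S}`. -/
def Tset (F : Set (List A)) (u : List A) (S : Set (ℕ → A)) : Set (ℕ → A) :=
  {z | z ∈ SubshiftOf F ∧ StartsWith u z ∧ sseq u.length z ∈ S}

lemma Tset_Cset {F : Set (List A)} (u γ δ : List A) :
    Tset F u (Cset F γ δ) = Cset F γ (u ++ δ) := by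
  ext z
  simp only [Tset, Set.mem_setOf_eq, mem_Cset, List.length_append, startsWith_append,
    sseq_sseq]
  constructor
  · rintro ⟨h1, h2, _, h4, h5⟩
    exact ⟨h1, ⟨h2, h4⟩, h5⟩
  · rintro ⟨h1, ⟨h2, h4⟩, h5⟩
    exact ⟨h1, h2, sseq_mem h1 _, h4, h5⟩

lemma Tset_union {F : Set (List A)} (u : List A) (S T : Set (ℕ → A)) :
    Tset F u (S ∪ T) = Tset F u S ∪ Tset F u T := by
  ext z
  simp only [Tset, Set.mem_setOf_eq, Set.mem_union]
  tauto

lemma Tset_inter {F : Set (List A)} (u : List A) (S T : Set (ℕ → A)) :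
    Tset F u (S ∩ T) = Tset F u S ∩ Tset F u T := by
  ext z
  simp only [Tset, Set.mem_setOf_eq, Set.mem_inter_iff]
  tauto

lemma Tset_compl {F : Set (List A)} (u : List A) (S : Set (ℕ → A)) :
    Tset F u (SubshiftOf F \ S) = Zcyl F u \ Tset F u S := by
  ext z
  simp only [Tset, Set.mem_setOf_eq, Set.mem_diff, mem_Zcyl]
  constructor
  · rintro ⟨h1, h2, _, h4⟩
    exact ⟨⟨h1, h2⟩, fun h => h4 h.2.2⟩
  · rintro ⟨⟨h1, h2⟩, h3⟩
    exact ⟨h1, h2, sseq_mem h1 _, fun hS => h3 ⟨h1, h2, hS⟩⟩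

lemma InU_Tset {F : Set (List A)} {u : List A} (hu : u ∈ Lang F)
    {S : Set (ℕ → A)} (hS : InU F S) : InU F (Tset F u S) := by
  induction hS with
  | @base γ δ hγ hδ =>
    rw [Tset_Cset]
    by_cases h : u ++ δ ∈ Lang F
    · exact InU.base hγ h
    · rw [Cset_eq_empty_right h]
      exact InU_empty (lang_nil hu)
  | union _ _ ih1 ih2 => rw [Tset_union]; exact InU.union ih1 ih2
  | inter _ _ ih1 ih2 => rw [Tset_inter]; exact InU.inter ih1 ih2
  | @compl S _ ih =>
    rw [Tset_compl]
    have : Zcyl F u \ Tset F u S = Zcyl F u ∩ (SubshiftOf F \ Tset F u S) := by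
      ext z
      simp only [Set.mem_diff, Set.mem_inter_iff]
      exact ⟨fun ⟨h1, h2⟩ => ⟨h1, (mem_Zcyl.mp h1).1, h2⟩, fun ⟨h1, _, h2⟩ => ⟨h1, h2⟩⟩
    rw [this]
    exact InU.inter (InU_Zcyl (lang_nil hu)) (InU.compl ih)

lemma sseq_wcat_drop {m : ℕ} {w : List A} (hm : m ≤ w.length) (x : ℕ → A) :
    sseq m (wcat w x) = wcat (w.drop m) x := by
  have h1 : wcat w x = wcat (w.take m) (wcat (w.drop m) x) := by
    rw [← wcat_append, List.take_append_drop]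
  have hl : (w.take m).length = m := by simp; omega
  have h2 := sseq_wcat (w.take m) (wcat (w.drop m) x)
  rw [hl] at h2
  rw [h1, h2]

lemma wcat_single_sseq {z : ℕ → A} {k : ℕ} {a : A} (h : z k = a) :
    wcat [a] (sseq (k + 1) z) = sseq k z := by
  funext i
  match i with
  | 0 => simpa [wcat, sseq] using h.symm
  | (i + 1) =>
    rw [wcat_ge [a] _ (by simp)]
    simp only [List.length_singleton, sseq]
    congr 1
    omega

/-- `σ^m(Z_w ∖ ⋃_{a∈G} Z_{wa})`, as a difference of `C`-sets. -/
def Eset (F : Set (List A)) (m : ℕ) (w : List A) (G : Finset A) : Set (ℕ → A) :=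
  Cset F w (w.drop m) \ ⋃ a ∈ G, Cset F (w ++ [a]) (w.drop m ++ [a])

lemma Eset_eq_image {F : Set (List A)} {m : ℕ} {w : List A} (hm : m ≤ w.length)
    (G : Finset A) : Eset F m w G = sseq m '' Dset F w G := by
  have hlv : (w.drop m).length = w.length - m := by simp
  ext z'
  constructor
  · rintro ⟨hc, hnot⟩
    rw [mem_Cset] at hc
    obtain ⟨hz'X, hsw, hwx⟩ := hc
    refine ⟨wcat w (sseq (w.drop m).length z'), ?_, ?_⟩
    · rw [mem_Dset]
      refine ⟨hwx, startsWith_wcat _ _, fun a ha heq => ?_⟩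
      apply hnot
      simp only [Set.mem_iUnion]
      refine ⟨a, ha, ?_⟩
      rw [mem_Cset]
      have hz'v : z' (w.drop m).length = a := by
        rw [wcat_ge w _ (le_refl _)] at heq
        simpa [hlv, sseq] using heq
      refine ⟨hz'X, startsWith_snoc.mpr ⟨hsw, hz'v⟩, ?_⟩
      have : wcat (w ++ [a]) (sseq ((w.drop m ++ [a]).length) z')
          = wcat w (sseq (w.drop m).length z') := by
        rw [wcat_append]
        have : (w.drop m ++ [a]).length = (w.drop m).length + 1 := by simp
        rw [this, wcat_single_sseq hz'v]
      rw [this]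
      exact hwx
    · rw [sseq_wcat_drop hm, wcat_eq_self hsw]
  · rintro ⟨Z, hZ, rfl⟩
    rw [mem_Dset] at hZ
    obtain ⟨hZX, hZw, hZG⟩ := hZ
    constructor
    · rw [mem_Cset]
      refine ⟨sseq_mem hZX m, ?_, ?_⟩
      · intro j hj
        simp only [sseq]
        rw [hZw (m + j) (by simp at hj; omega)]
        rw [List.getElem_drop]
      · rw [hlv, sseq_sseq]
        have : m + (w.length - m) = w.length := by omega
        rw [this, wcat_eq_self hZw]
        exact hZX
    · intro hmem
      simp only [Set.mem_iUnion] at hmem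
      obtain ⟨a, ha, hmem⟩ := hmem
      rw [mem_Cset] at hmem
      apply hZG a ha
      have := (startsWith_snoc.mp hmem.2.1).2
      simp only [sseq] at this
      rw [← this]
      congr 1
      omega
    
lemma InU_Eset {F : Set (List A)} {m : ℕ} {w : List A} (hw : w ∈ Lang F)
    (hm : m ≤ w.length) (G : Finset A) : InU F (Eset F m w G) := by
  classical
  have hnil := lang_nil hw
  have hbig : InU F (⋃ a ∈ G, Cset F (w ++ [a]) (w.drop m ++ [a])) := by
    induction G using Finset.induction with
    | empty => simpa using InU_empty hnil
    | @insert a s hx ih =>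
      rw [Finset.set_biUnion_insert]
      refine InU.union ?_ ih
      by_cases ha : w ++ [a] ∈ Lang F
      · have : w.drop m ++ [a] ∈ Lang F := by
          have := lang_drop ha m
          rwa [List.drop_append_of_le_length hm] at this
        exact InU.base ha this
      · rw [Cset_eq_empty_left ha]
        exact InU_empty hnil
  have : Eset F m w G
      = Cset F w (w.drop m) ∩ (SubshiftOf F \ ⋃ a ∈ G, Cset F (w ++ [a]) (w.drop m ++ [a])) := by
    ext z
    simp only [Eset, Set.mem_diff, Set.mem_inter_iff]
    exact ⟨fun ⟨h1, h2⟩ => ⟨h1, Cset_subset h1, h2⟩, fun ⟨h1, _, h2⟩ => ⟨h1, h2⟩⟩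
  rw [this]
  exact InU.inter (InU.base hw (lang_drop hw m)) (InU.compl hbig)

lemma Dset_inter_sseq {F : Set (List A)} {n : ℕ} {w : List A} (hn : n ≤ w.length)
    (G : Finset A) (B : Set (ℕ → A)) :
    Dset F w G ∩ {z | sseq n z ∈ B} =
      Tset F (w.take n) (Dset F (w.drop n) G ∩ B) := by
  have hlt : (w.take n).length = n := by simp; omega
  ext z
  simp only [Set.mem_inter_iff, mem_Dset, Tset, Set.mem_setOf_eq, hlt]
  constructor
  · rintro ⟨⟨h1, h2, h3⟩, h4⟩
    have hsw' : StartsWith (w.take n ++ w.drop n) z := by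
      rw [List.take_append_drop]; exact h2
    have hsw := startsWith_append.mp hsw'
    rw [hlt] at hsw
    refine ⟨h1, hsw.1, ⟨⟨sseq_mem h1 n, hsw.2, fun a ha => ?_⟩, h4⟩⟩
    intro heq
    apply h3 a ha
    rw [← heq]
    simp only [sseq, List.length_drop]
    congr 1
    omega
  · rintro ⟨h1, h2, ⟨⟨_, h4, h5⟩, h6⟩⟩
    refine ⟨⟨h1, ?_, fun a ha heq => ?_⟩, h6⟩
    · rw [← List.take_append_drop n w]
      rw [startsWith_append, hlt]
      exact ⟨h2, h4⟩
    · apply h5 a ha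
      simp only [sseq, List.length_drop]
      rw [← heq]
      congr 1
      omega

end Lib3
section Lib4

variable {A : Type*}

lemma ofSeq_injective : Function.Injective (ofSeq : (ℕ → A) → (ℕ → Option A)) := by
  intro x y h
  funext i
  have := congrFun h i
  simpa [ofSeq] using this

lemma ofSeq_ne_none (x : ℕ → A) (i : ℕ) : ofSeq x i ≠ none := by simp [ofSeq]

lemma ofWord_length_none (w : List A) : ofWord w w.length = none := by
  simp [ofWord]

lemma ofWord_eq_iff {w v : List A} (h : ofWord w = ofWord v) : w = v := by
  have hlen : w.length = v.length := by
    by_contra hne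
    rcases Nat.lt_or_ge w.length v.length with hl | hl
    · have := congrFun h w.length
      rw [ofWord_length_none] at this
      simp [ofWord, hl] at this
    · have hl' : v.length < w.length := by omega
      have := congrFun h v.length
      rw [ofWord_length_none v] at this
      simp [ofWord, hl'] at this
  apply List.ext_getElem hlen
  intro i h1 h2
  have := congrFun h i
  simpa [ofWord, h1, h2] using this

lemma otw_none_succ {F : Set (List A)} {y : ℕ → Option A} (hy : y ∈ OTW F) {i : ℕ}
    (h : y i = none) : y (i + 1) = none := by
  rcases hy with ⟨x, _, rfl⟩ | ⟨w, _, rfl⟩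
  · exact absurd h (ofSeq_ne_none x i)
  · simp only [ofWord] at h ⊢
    split at h
    · exact absurd h (by simp)
    · have : ¬ i + 1 < w.length := by omega
      simp [this]

lemma xfin_extend {F : Set (List A)} {w : List A} (hw : w ∈ XFin F) :
    ∃ x, wcat w x ∈ SubshiftOf F := by
  obtain ⟨a, t, ht⟩ := hw.nonempty
  rw [wcat_append] at ht
  exact ⟨_, ht⟩

lemma otw_block {F : Set (List A)} {y : ℕ → Option A} (hy : y ∈ OTW F) {u : List A}
    {i : ℕ} (hb : ∀ j, ∀ _ : j < u.length, y (i + j) = some u[j]) :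
    ∃ x ∈ SubshiftOf F, IsBlockAt x u i := by
  rcases hy with ⟨x, hx, rfl⟩ | ⟨w, hw, rfl⟩
  · refine ⟨x, hx, fun j hj => ?_⟩
    have := hb j hj
    simpa [ofSeq] using this
  · obtain ⟨x, hx⟩ := xfin_extend hw
    refine ⟨wcat w x, hx, fun j hj => ?_⟩
    have := hb j hj
    simp only [ofWord] at this
    split at this
    · rw [wcat_lt w x (by assumption)]
      simpa using this
    · simp at this

lemma otw_block_lang {F : Set (List A)} {y : ℕ → Option A} (hy : y ∈ OTW F) {u : List A}
    {i : ℕ} (hb : ∀ j, ∀ _ : j < u.length, y (i + j) = some u[j]) : u ∈ Lang F := by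
  obtain ⟨x, hx, hbl⟩ := otw_block hy hb
  exact ⟨x, hx, i, hbl⟩

lemma otw_nonemptyX {F : Set (List A)} {y : ℕ → Option A} (hy : y ∈ OTW F) :
    ∃ x, x ∈ SubshiftOf F := by
  rcases hy with ⟨x, hx, _⟩ | ⟨w, hw, _⟩
  · exact ⟨x, hx⟩
  · obtain ⟨x, hx⟩ := xfin_extend hw
    exact ⟨wcat w x, hx⟩

lemma otw_exists_seq {F : Set (List A)} {y : ℕ → Option A} (hy : y ∈ OTW F)
    (h : ∀ i, y i ≠ none) : ∃ x ∈ SubshiftOf F, y = ofSeq x := by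
  rcases hy with ⟨x, hx, rfl⟩ | ⟨w, _, rfl⟩
  · exact ⟨x, hx, rfl⟩
  · exact absurd (ofWord_length_none w) (h w.length)

lemma shiftO_ofSeq (x : ℕ → A) : shiftO (ofSeq x) = ofSeq (sseq 1 x) := by
  funext i
  simp [shiftO, ofSeq, sseq, Nat.add_comm]

lemma shiftO_ofWord (w : List A) : shiftO (ofWord w) = ofWord w.tail := by
  funext i
  simp only [shiftO, ofWord, List.length_tail]
  rcases lt_or_ge i (w.length - 1) with h | h
  · have h1 : i + 1 < w.length := by omega
    simp only [h1, dite_true, h, dite_true]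
    rw [List.getElem_tail]
  · have h1 : ¬ i + 1 < w.length := by omega
    have h2 : ¬ i < w.length - 1 := by omega
    simp [h1, h2]

lemma xfin_tail {F : Set (List A)} {w : List A} (hw : w ∈ XFin F) : w.tail ∈ XFin F := by
  apply Set.Infinite.mono _ hw
  intro a ⟨t, ht⟩
  cases w with
  | nil => exact ⟨t, ht⟩
  | cons c w' =>
    refine ⟨t, ?_⟩
    have : (c :: w') ++ [a] = [c] ++ (w' ++ [a]) := by simp
    rw [this, wcat_append] at ht
    exact mem_shift ht

lemma shiftO_mem_OTW {F : Set (List A)} {y : ℕ → Option A} (hy : y ∈ OTW F) :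
    shiftO y ∈ OTW F := by
  rcases hy with ⟨x, hx, rfl⟩ | ⟨w, hw, rfl⟩
  · rw [shiftO_ofSeq]
    exact ofSeq_mem_OTW (sseq_mem hx 1)
  · rw [shiftO_ofWord]
    exact ofWord_mem_OTW (xfin_tail hw)

/-- The shift on the OTW space, as a self-map of the subtype. -/
def sigT (F : Set (List A)) : ↥(OTW F) → ↥(OTW F) :=
  fun y => ⟨shiftO (y : ℕ → Option A), shiftO_mem_OTW y.2⟩

lemma sigT_iter_val (F : Set (List A)) (k : ℕ) (y : ↥(OTW F)) :
    (((sigT F)^[k]) y : ℕ → Option A) = (fun v => shiftO v)^[k] (y : ℕ → Option A) := by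
  induction k generalizing y with
  | zero => rfl
  | succ k ih =>
    rw [Function.iterate_succ_apply, Function.iterate_succ_apply]
    exact ih (sigT F y)

lemma shiftO_iter_ofSeq (k : ℕ) (x : ℕ → A) :
    (fun v => shiftO v)^[k] (ofSeq x) = ofSeq (sseq k x) := by
  induction k with
  | zero => rw [Function.iterate_zero_apply, sseq_zero]
  | succ k ih =>
    rw [Function.iterate_succ_apply', ih, shiftO_ofSeq, sseq_sseq]

end Lib4
section Lib5

variable {A : Type*}

/-- A generalised cylinder, as a subset of the OTW subshift subtype. -/
def cylT (F : Set (List A)) (w : List A) (G : Set A) : Set ↥(OTW F) :=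
  {y | (y : ℕ → Option A) ∈ genCyl F w G}

lemma mem_cylT {F : Set (List A)} {w : List A} {G : Set A} {y : ↥(OTW F)} :
    y ∈ cylT F w G ↔
      (∀ j, ∀ _ : j < w.length, (y : ℕ → Option A) j = some w[j]) ∧
      ∀ a ∈ G, (y : ℕ → Option A) w.length ≠ some a := by
  simp only [cylT, genCyl, Set.mem_setOf_eq]
  exact ⟨fun ⟨_, h2, h3⟩ => ⟨h2, h3⟩, fun ⟨h2, h3⟩ => ⟨y.2, h2, h3⟩⟩

lemma isOpen_cylT {F : Set (List A)} {w : List A} {G : Set A} (hw : w ∈ Lang F)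
    (hG : G.Finite) : IsOpen (cylT F w G) :=
  TopologicalSpace.GenerateOpen.basic _ ⟨w, hw, G, hG, rfl⟩

lemma cylT_anti {F : Set (List A)} {w : List A} {G G' : Set A} (h : G ⊆ G') :
    cylT F w G' ⊆ cylT F w G := by
  intro y hy
  rw [mem_cylT] at hy ⊢
  exact ⟨hy.1, fun a ha => hy.2 a (h ha)⟩

lemma cylT_words_eq {F : Set (List A)} {w1 w2 : List A} {G1 G2 : Set A} {z : ↥(OTW F)}
    (h1 : z ∈ cylT F w1 G1) (h2 : z ∈ cylT F w2 G2) (hlen : w1.length = w2.length) :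
    w1 = w2 := by
  rw [mem_cylT] at h1 h2
  apply List.ext_getElem hlen
  intro i ha hb
  have e1 := h1.1 i ha
  have e2 := h2.1 i hb
  rw [e1] at e2
  exact Option.some.inj e2

lemma cylT_subset_of_lt {F : Set (List A)} {w1 w2 : List A} {G1 G2 : Set A} {z : ↥(OTW F)}
    (h1 : z ∈ cylT F w1 G1) (h2 : z ∈ cylT F w2 G2) (hlen : w1.length < w2.length) :
    cylT F w2 G2 ⊆ cylT F w1 G1 := by
  rw [mem_cylT] at h1 h2
  intro y hy
  rw [mem_cylT] at hy ⊢
  constructor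
  · intro j hj
    have hj2 : j < w2.length := by omega
    rw [hy.1 j hj2]
    have e1 := h1.1 j hj
    have e2 := h2.1 j hj2
    rw [e1] at e2
    exact Option.some.inj e2.symm ▸ rfl
  · intro a ha
    rw [hy.1 w1.length hlen]
    have e1 := h1.2 a ha
    have e2 := h2.1 w1.length hlen
    rw [e2] at e1
    exact e1

/-- every point of an open set lies in a generalised cylinder inside it. -/
lemma open_refine {F : Set (List A)} {O : Set ↥(OTW F)} (hO : IsOpen O) :
    ∀ z ∈ O, ∃ w : List A, ∃ G : Set A,
      w ∈ Lang F ∧ G.Finite ∧ z ∈ cylT F w G ∧ cylT F w G ⊆ O := by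
  have hO' : TopologicalSpace.GenerateOpen
      {V | ∃ w ∈ Lang F, ∃ F' : Set A, F'.Finite ∧
        V = {y : ↥(OTW F) | (y : ℕ → Option A) ∈ genCyl F w F'}} O := hO
  clear hO
  induction hO' with
  | basic V hV =>
    obtain ⟨w, hw, G, hG, rfl⟩ := hV
    exact fun z hz => ⟨w, G, hw, hG, hz, fun y hy => hy⟩
  | univ =>
    intro z _
    obtain ⟨x, hx⟩ := otw_nonemptyX z.2
    refine ⟨[], ∅, nonemptyX_lang_nil hx, Set.finite_empty, ?_, fun y _ => trivial⟩
    rw [mem_cylT]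
    exact ⟨fun j hj => by simp at hj, fun a ha => by simp at ha⟩
  | inter O1 O2 _ _ ih1 ih2 =>
    intro z hz
    obtain ⟨w1, G1, hw1, hG1, hz1, hs1⟩ := ih1 z hz.1
    obtain ⟨w2, G2, hw2, hG2, hz2, hs2⟩ := ih2 z hz.2
    rcases lt_trichotomy w1.length w2.length with h | h | h
    · exact ⟨w2, G2, hw2, hG2, hz2,
        fun y hy => ⟨hs1 (cylT_subset_of_lt hz1 hz2 h hy), hs2 hy⟩⟩
    · have hww : w1 = w2 := cylT_words_eq hz1 hz2 h
      subst hww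
      refine ⟨w1, G1 ∪ G2, hw1, hG1.union hG2, ?_, ?_⟩
      · rw [mem_cylT] at hz1 hz2 ⊢
        exact ⟨hz1.1, fun a ha => ha.elim (hz1.2 a) (hz2.2 a)⟩
      · intro y hy
        exact ⟨hs1 (cylT_anti Set.subset_union_left hy),
          hs2 (cylT_anti Set.subset_union_right hy)⟩
    · exact ⟨w1, G1, hw1, hG1, hz1,
        fun y hy => ⟨hs1 hy, hs2 (cylT_subset_of_lt hz2 hz1 h hy)⟩⟩
  | sUnion S _ ih =>
    intro z hz
    obtain ⟨O, hOS, hzO⟩ := hz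
    obtain ⟨w, G, hw, hG, hz1, hs1⟩ := ih O hOS z hzO
    exact ⟨w, G, hw, hG, hz1, fun y hy => ⟨O, hOS, hs1 hy⟩⟩

lemma otw_none_ge {F : Set (List A)} {y : ℕ → Option A} (hy : y ∈ OTW F) {i : ℕ}
    (h : y i = none) : ∀ j, i ≤ j → y j = none := by
  intro j hij
  induction j with
  | zero =>
    have : i = 0 := by omega
    rwa [← this]
  | succ k ih =>
    rcases Nat.lt_or_ge k i with hk | hk
    · have : i = k + 1 := by omega
      rwa [← this]
    · exact otw_none_succ hy (ih hk)

end Lib5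
section Lib6

variable {A : Type*}

open TopologicalSpace in
lemma isCompact_cylT_empty (F : Set (List A)) (β : List A) :
    IsCompact (cylT F β (∅ : Set A)) := by
  classical
  rw [isCompact_iff_ultrafilter_le_nhds]
  intro f hf'
  have hf : cylT F β (∅ : Set A) ∈ f := Filter.le_principal_iff.mp hf'
  clear hf'
  -- the letter sets
  let Pset : ℕ → Option A → Set ↥(OTW F) := fun i o => {y | (y : ℕ → Option A) i = o}
  let P : ℕ → Option A → Prop := fun i o => Pset i o ∈ f
  have Puniq : ∀ i o o', P i o → P i o' → o = o' := by
    intro i o o' h1 h2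
    obtain ⟨y, hy1, hy2⟩ := Filter.nonempty_of_mem (Filter.inter_mem h1 h2)
    rw [Set.mem_setOf_eq] at hy1 hy2
    rw [← hy1, ← hy2]
  let Q : ℕ → Prop := fun i => ∃ a : A, P i (some a)
  let R : ℕ → Prop := fun i => ∀ j, j ≤ i → Q j
  have Rmono : ∀ {i j}, j ≤ i → R i → R j := fun hji hi j hj => hi j (le_trans hj hji)
  have hQc : ∀ i, R i → ∃ a : A, P i (some a) := fun i h => h i le_rfl
  let y0 : ℕ → Option A := fun i => if h : R i then some (hQc i h).choose else none
  have hy0some : ∀ i (h : R i), y0 i = some (hQc i h).choose := by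
    intro i h; simp only [y0, dif_pos h]
  have hy0none : ∀ i, ¬ R i → y0 i = none := by
    intro i h; simp only [y0, dif_neg h]
  have hy0P : ∀ i c, y0 i = some c → P i (some c) := by
    intro i c hc
    by_cases h : R i
    · rw [hy0some i h] at hc
      rw [← Option.some.inj hc]
      exact (hQc i h).choose_spec
    · rw [hy0none i h] at hc; exact absurd hc (by simp)
  have hy0R : ∀ i c, y0 i = some c → R i := by
    intro i c hc
    by_cases h : R i
    · exact h
    · rw [hy0none i h] at hc; exact absurd hc (by simp)
  have hnoP : ∀ i, (∀ j, j < i → R j) → ¬ R i → ∀ a : A, ¬ P i (some a) := by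
    intro i hlt hni a hPa
    apply hni
    intro j hj
    rcases Nat.lt_or_ge j i with h | h
    · exact hQc j (hlt j h) |>.elim (fun a' ha' => ⟨a', ha'⟩)
    · have : j = i := by omega
      subst this
      exact ⟨a, hPa⟩
  -- the cylinder facts
  have hβP : ∀ j, ∀ _ : j < β.length, P j (some β[j]) := by
    intro j hj
    apply Filter.mem_of_superset hf
    intro y hy
    exact (mem_cylT.mp hy).1 j hj
  have hβQ : ∀ j, j < β.length → Q j := fun j hj => ⟨β[j], hβP j hj⟩
  have hβR : ∀ j, j < β.length → R j := fun j hj k hk => hβQ k (by omega)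
  have hy0β : ∀ j, ∀ hj : j < β.length, y0 j = some β[j] := by
    intro j hj
    rw [hy0some j (hβR j hj)]
    have := Puniq j _ _ ((hQc j (hβR j hj)).choose_spec) (hβP j hj)
    rw [this]
  -- y0 belongs to the OTW subshift
  have hy0otw : y0 ∈ OTW F := by
    by_cases hall : ∀ i, R i
    · -- infinite case
      let x : ℕ → A := fun i => (hQc i (hall i)).choose
      have hx : y0 = ofSeq x := by
        funext i
        rw [hy0some i (hall i)]
        rfl
      rw [hx]
      apply ofSeq_mem_OTW
      intro u hu i hbl
      have hT : (⋂ j ∈ Finset.range u.length,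
          Pset (i + j) (some (x (i + j)))) ∈ f := by
        refine (Filter.biInter_finset_mem _).mpr ?_
        intro j _
        exact hy0P (i + j) (x (i + j)) (by rw [hx]; rfl)
      obtain ⟨y', hy'⟩ := Filter.nonempty_of_mem hT
      simp only [Set.mem_iInter, Finset.mem_range] at hy'
      have hb : ∀ j, ∀ _ : j < u.length, (y' : ℕ → Option A) (i + j) = some u[j] := by
        intro j hj
        rw [hy' j hj, hbl j hj]
      obtain ⟨x', hx', hbl'⟩ := otw_block y'.2 hb
      exact hx' u hu i hbl'
    · -- finite-word case
      have hex : ∃ i, ¬ R i := not_forall.mp hall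
      let ℓ := Nat.find hex
      have hℓ : ¬ R ℓ := Nat.find_spec hex
      have hlt : ∀ j, j < ℓ → R j := fun j hj => not_not.mp (Nat.find_min hex hj)
      have hQℓ : ∀ a : A, ¬ P ℓ (some a) := hnoP ℓ hlt hℓ
      let w : List A := List.ofFn (fun j : Fin ℓ => (hQc j (hlt j j.2)).choose)
      have hwlen : w.length = ℓ := by simp [w]
      have hwget : ∀ j (hj : j < ℓ), w[j]'(by omega) = (hQc j (hlt j hj)).choose := by
        intro j hj
        simp [w]
      have hy0w : y0 = ofWord w := by
        funext i
        by_cases hi : i < ℓ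
        · rw [hy0some i (hlt i hi)]
          simp only [ofWord, hwlen, hi, dite_true]
          rw [hwget i hi]
        · have : ¬ R i := fun hR => hℓ (Rmono (by omega) hR)
          rw [hy0none i this]
          simp only [ofWord, hwlen]
          have : ¬ i < ℓ := hi
          simp [this]
      have hwXFin : w ∈ XFin F := by
        by_contra hfin
        have hfin' : {a : A | ∃ t : ℕ → A, wcat (w ++ [a]) t ∈ SubshiftOf F}.Finite :=
          Set.not_infinite.mp hfin
        have hT : ((⋂ j ∈ Finset.range ℓ, Pset j (y0 j)) ∩
            ⋂ a ∈ hfin'.toFinset, (Pset ℓ (some a))ᶜ) ∈ f := by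
          apply Filter.inter_mem
          · refine (Filter.biInter_finset_mem _).mpr ?_
            intro j hj
            rw [Finset.mem_range] at hj
            rw [hy0some j (hlt j hj)]
            exact (hQc j (hlt j hj)).choose_spec
          · refine (Filter.biInter_finset_mem _).mpr ?_
            intro a _
            exact Ultrafilter.compl_mem_iff_notMem.mpr (hQℓ a)
        obtain ⟨y', hy'1, hy'2⟩ := Filter.nonempty_of_mem hT
        simp only [Set.mem_iInter, Finset.mem_range] at hy'1
        simp only [Set.mem_iInter, Set.Finite.mem_toFinset, Set.mem_compl_iff,
          Set.mem_setOf_eq] at hy'2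
        have hstart : ∀ j, ∀ hj : j < ℓ, (y' : ℕ → Option A) j = some (w[j]'(by omega)) := by
          intro j hj
          rw [hy'1 j hj, hy0some j (hlt j hj), hwget j hj]
        rcases hcase : (y' : ℕ → Option A) ℓ with _ | b
        · -- y' is the finite word w itself
          have hy'w : (y' : ℕ → Option A) = ofWord w := by
            funext i
            by_cases hi : i < ℓ
            · rw [hstart i hi]
              simp [ofWord, hwlen, hi]
            · rw [otw_none_ge y'.2 hcase i (by omega)]
              simp only [ofWord, hwlen]
              simp [hi]
          rcases y'.2 with ⟨x', _, hx'⟩ | ⟨v, hv, hv'⟩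
          · rw [← hx'] at hy'w
            have := congrFun hy'w ℓ
            rw [ofWord] at this
            simp [hwlen, ofSeq] at this
          · rw [← hv'] at hy'w
            rw [ofWord_eq_iff hy'w] at hv
            exact hfin hv
        · -- y' starts with w ++ [b], so b extends w
          have hb : ∀ j, ∀ _ : j < (w ++ [b]).length,
              (y' : ℕ → Option A) (0 + j) = some ((w ++ [b])[j]) := by
            intro j hj
            simp only [List.length_append, List.length_singleton, hwlen] at hj
            rw [Nat.zero_add]
            rcases Nat.lt_or_ge j ℓ with h | h
            · rw [hstart j h]
              have hjw : j < w.length := by omega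
              congr 1
              simp [List.getElem_append, hjw]
            · have hje : j = ℓ := by omega
              subst hje
              rw [hcase]
              have hnl : ¬ ℓ < w.length := by omega
              congr 1
              simp [List.getElem_append, hnl, hwlen]
          obtain ⟨x', hx', hbl'⟩ := otw_block y'.2 hb
          apply hy'2 b
          · refine ⟨sseq (w ++ [b]).length x', ?_⟩
            have : wcat (w ++ [b]) (sseq (w ++ [b]).length x') = x' := by
              apply wcat_eq_self
              intro j hj
              simpa using hbl' j hj
            rwa [this]
          · exact hcase
      rw [hy0w]
      exact ofWord_mem_OTW hwXFin
  -- the limit point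
  refine ⟨⟨y0, hy0otw⟩, ?_, ?_⟩
  · rw [mem_cylT]
    exact ⟨hy0β, fun a ha => by simp at ha⟩
  · -- convergence
    rw [TopologicalSpace.nhds_generateFrom]
    refine le_iInf fun V => le_iInf fun hV => ?_
    obtain ⟨hyV, w, hw, G, hG, rfl⟩ := hV
    rw [Filter.le_principal_iff]
    simp only [Set.mem_setOf_eq, genCyl] at hyV
    obtain ⟨-, hm1, hm2⟩ := hyV
    have hR : ∀ j, j < w.length → R j := fun j hj => hy0R j _ (hm1 j hj)
    have hPj : ∀ j, ∀ _ : j < w.length, P j (some w[j]) :=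
      fun j hj => hy0P j _ (hm1 j hj)
    rcases hcase : y0 w.length with _ | c
    · -- y0 ends before position |w|
      have hnR : ¬ R w.length := by
        intro hRw
        rw [hy0some _ hRw] at hcase
        exact absurd hcase (by simp)
      have hQw : ∀ a : A, ¬ P w.length (some a) := hnoP w.length hR hnR
      have hT : ((⋂ j ∈ Finset.range w.length, Pset j (y0 j)) ∩
          ⋂ a ∈ hG.toFinset, (Pset w.length (some a))ᶜ) ∈ f := by
        apply Filter.inter_mem
        · refine (Filter.biInter_finset_mem _).mpr ?_
          intro j hj
          rw [Finset.mem_range] at hj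
          rw [hy0some j (hR j hj)]
          exact (hQc j (hR j hj)).choose_spec
        · refine (Filter.biInter_finset_mem _).mpr ?_
          intro a _
          exact Ultrafilter.compl_mem_iff_notMem.mpr (hQw a)
      apply Filter.mem_of_superset hT
      rintro y' ⟨h1, h2⟩
      simp only [Set.mem_iInter, Finset.mem_range] at h1
      simp only [Set.mem_iInter, Set.Finite.mem_toFinset, Set.mem_compl_iff,
        Set.mem_setOf_eq] at h2
      refine ⟨y'.2, fun j hj => ?_, fun a ha => ?_⟩
      · rw [h1 j hj, hm1 j hj]
      · exact h2 a ha
    · -- y0 has letter c at position |w|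
      have hcG : ∀ a ∈ G, c ≠ a := fun a ha heq => hm2 a ha (by rw [hcase, heq])
      have hT : ((⋂ j ∈ Finset.range w.length, Pset j (y0 j)) ∩
          Pset w.length (some c)) ∈ f := by
        apply Filter.inter_mem
        · refine (Filter.biInter_finset_mem _).mpr ?_
          intro j hj
          rw [Finset.mem_range] at hj
          rw [hy0some j (hR j hj)]
          exact (hQc j (hR j hj)).choose_spec
        · exact hy0P _ _ hcase
      apply Filter.mem_of_superset hT
      rintro y' ⟨h1, h2⟩
      simp only [Set.mem_iInter, Finset.mem_range] at h1
      rw [Set.mem_setOf_eq] at h2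
      refine ⟨y'.2, fun j hj => ?_, fun a ha => ?_⟩
      · rw [h1 j hj, hm1 j hj]
      · rw [h2]
        intro heq
        exact hcG a ha (Option.some.inj heq)

end Lib6
section Lib7

variable {A : Type*}

/-- the first `n` letters of an OTW point having length `≥ n`. -/
noncomputable def firstN (y : ℕ → Option A) (n : ℕ) (h : ∀ j, j < n → y j ≠ none) :
    List A :=
  List.ofFn (fun j : Fin n => (y j).get (Option.ne_none_iff_isSome.mp (h j j.2)))

lemma firstN_length (y : ℕ → Option A) (n : ℕ) (h : ∀ j, j < n → y j ≠ none) :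
    (firstN y n h).length = n := by simp [firstN]

lemma firstN_spec (y : ℕ → Option A) (n : ℕ) (h : ∀ j, j < n → y j ≠ none)
    {j : ℕ} (hj : j < (firstN y n h).length) : y j = some (firstN y n h)[j] := by
  have hj' : j < n := by rwa [firstN_length] at hj
  simp [firstN]

lemma refine_length {F : Set (List A)} {K : Set ↥(OTW F)} {n : ℕ}
    (hlen : ∀ y ∈ K, ∀ j, j < n → (y : ℕ → Option A) j ≠ none)
    {z : ↥(OTW F)} (hz : z ∈ K) {w : List A} {G : Set A} (hw : w ∈ Lang F)
    (hG : G.Finite) (hzc : z ∈ cylT F w G) (hsub : cylT F w G ⊆ K) :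
    ∃ w' : List A, ∃ G' : Set A, w' ∈ Lang F ∧ G'.Finite ∧ n ≤ w'.length ∧
      z ∈ cylT F w' G' ∧ cylT F w' G' ⊆ K := by
  rcases le_or_gt n w.length with h | h
  · exact ⟨w, G, hw, hG, h, hzc, hsub⟩
  · have hznone : ∀ j, j < n → (z : ℕ → Option A) j ≠ none := hlen z hz
    set w' := firstN (z : ℕ → Option A) n hznone with hw'
    have hw'len : w'.length = n := firstN_length _ _ _
    have hzw' : ∀ j, ∀ _ : j < w'.length, (z : ℕ → Option A) j = some w'[j] :=
      fun j hj => firstN_spec _ _ _ hj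
    have hz_mem : z ∈ cylT F w' (∅ : Set A) := by
      rw [mem_cylT]
      exact ⟨hzw', fun a ha => by simp at ha⟩
    have hlang : w' ∈ Lang F := by
      apply otw_block_lang (i := 0) z.2
      intro j hj
      rw [Nat.zero_add]
      exact hzw' j hj
    have hsub' : cylT F w' (∅ : Set A) ⊆ cylT F w G :=
      cylT_subset_of_lt hzc hz_mem (by omega)
    exact ⟨w', ∅, hlang, Set.finite_empty, by omega, hz_mem, fun y hy => hsub (hsub' hy)⟩

lemma compact_open_cover {F : Set (List A)} {K : Set ↥(OTW F)} (hK : IsCompact K)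
    (hKo : IsOpen K) (n : ℕ)
    (hlen : ∀ y ∈ K, ∀ j, j < n → (y : ℕ → Option A) j ≠ none) :
    ∃ l : List (List A × Finset A),
      (∀ p ∈ l, p.1 ∈ Lang F ∧ n ≤ p.1.length) ∧
      K = ⋃ p ∈ l, cylT F p.1 ↑p.2 := by
  classical
  let ι := {p : List A × Finset A // p.1 ∈ Lang F ∧ n ≤ p.1.length ∧ cylT F p.1 ↑p.2 ⊆ K}
  let U : ι → Set ↥(OTW F) := fun i => cylT F i.1.1 ↑i.1.2
  have hopen : ∀ i : ι, IsOpen (U i) := fun i => isOpen_cylT i.2.1 (Finset.finite_toSet _)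
  have hcov : K ⊆ ⋃ i, U i := by
    intro z hz
    obtain ⟨w, G, hw, hG, hzc, hsub⟩ := open_refine hKo z hz
    obtain ⟨w', G', hw', hG', hn', hz', hsub'⟩ := refine_length hlen hz hw hG hzc hsub
    refine Set.mem_iUnion.mpr ⟨⟨(w', hG'.toFinset), hw', hn', ?_⟩, ?_⟩
    · rwa [Set.Finite.coe_toFinset]
    · show z ∈ cylT F w' ↑hG'.toFinset
      rwa [Set.Finite.coe_toFinset]
  obtain ⟨t, ht⟩ := hK.elim_finite_subcover U hopen hcov
  refine ⟨t.toList.map Subtype.val, ?_, ?_⟩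
  · intro p hp
    simp only [List.mem_map, Finset.mem_toList] at hp
    obtain ⟨i, _, rfl⟩ := hp
    exact ⟨i.2.1, i.2.2.1⟩
  · apply Set.Subset.antisymm
    · intro z hz
      obtain ⟨V, ⟨i, rfl⟩, hzV⟩ := ht hz
      simp only [Set.mem_iUnion] at hzV
      obtain ⟨hi, hzV⟩ := hzV
      refine Set.mem_biUnion (s := {p | p ∈ t.toList.map Subtype.val}) ?_ hzV
      simp only [Set.mem_setOf_eq, List.mem_map, Finset.mem_toList]
      exact ⟨i, hi, rfl⟩
    · intro z hz
      simp only [Set.mem_iUnion] at hz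
      obtain ⟨p, hp, hzp⟩ := hz
      simp only [List.mem_map, Finset.mem_toList] at hp
      obtain ⟨i, _, rfl⟩ := hp
      exact i.2.2.2 hzp

end Lib7
section Lib8

variable {A : Type*}

lemma sigT_iter_ofSeq_val {F : Set (List A)} (x : ℕ → A) (hx : ofSeq x ∈ OTW F) (k : ℕ) :
    (((sigT F)^[k] ⟨ofSeq x, hx⟩ : ↥(OTW F)) : ℕ → Option A) = ofSeq (sseq k x) := by
  rw [sigT_iter_val, shiftO_iter_ofSeq]

/-- The trace of a subset of the OTW subshift on the underlying subshift. -/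
def traceSet (F : Set (List A)) (K : Set ↥(OTW F)) : Set (ℕ → A) :=
  {z | ∃ hz : z ∈ SubshiftOf F, (⟨ofSeq z, ofSeq_mem_OTW hz⟩ : ↥(OTW F)) ∈ K}

lemma traceSet_cylT (F : Set (List A)) (w : List A) (G : Finset A) :
    traceSet F (cylT F w ↑G) = Dset F w G := by
  ext z
  simp only [traceSet, Set.mem_setOf_eq, mem_cylT, mem_Dset]
  constructor
  · rintro ⟨hz, h1, h2⟩
    refine ⟨hz, fun j hj => Option.some.inj (h1 j hj), fun a ha heq => ?_⟩
    exact h2 a (by exact_mod_cast ha) (congrArg some heq)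
  · rintro ⟨hz, h1, h2⟩
    refine ⟨hz, fun j hj => congrArg some (h1 j hj), fun a ha heq => ?_⟩
    exact h2 a (by exact_mod_cast ha) (Option.some.inj heq)

lemma traceSet_biUnion (F : Set (List A)) {γ : Type*} (l : List γ)
    (g : γ → Set ↥(OTW F)) :
    traceSet F (⋃ p ∈ l, g p) = ⋃ p ∈ l, traceSet F (g p) := by
  ext z
  simp only [traceSet, Set.mem_setOf_eq, Set.mem_iUnion]
  constructor
  · rintro ⟨hz, p, hp, hmem⟩
    exact ⟨p, hp, hz, hmem⟩
  · rintro ⟨p, hp, hz, hmem⟩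
    exact ⟨hz, p, hp, hmem⟩

lemma InU_list_biUnion {F : Set (List A)} (hnil : ([] : List A) ∈ Lang F)
    {γ : Type*} (l : List γ) (g : γ → Set (ℕ → A))
    (hg : ∀ p ∈ l, InU F (g p)) : InU F (⋃ p ∈ l, g p) := by
  induction l with
  | nil => simpa using InU_empty hnil
  | cons a l ih =>
    have : (⋃ p ∈ (a :: l), g p) = g a ∪ ⋃ p ∈ l, g p := by
      ext z
      simp only [Set.mem_iUnion, Set.mem_union, List.mem_cons]
      constructor
      · rintro ⟨p, (rfl | hp), hzp⟩
        · exact Or.inl hzp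
        · exact Or.inr ⟨p, hp, hzp⟩
      · rintro (hza | ⟨p, hp, hzp⟩)
        · exact ⟨a, Or.inl rfl, hza⟩
        · exact ⟨p, Or.inr hp, hzp⟩
    rw [this]
    exact InU.union (hg a List.mem_cons_self) (ih fun p hp => hg p (List.mem_cons_of_mem a hp))

end Lib8

section Lib9

variable {A₁ A₂ : Type*} {F₁ : Set (List A₁)} {F₂ : Set (List A₂)}
  {h : ↥(OTW F₁) ≃ₜ ↥(OTW F₂)}

lemma IsConjugacy.symm (hconj : IsConjugacy F₁ F₂ h) : IsConjugacy F₂ F₁ h.symm := by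
  constructor
  · intro y hy
    have hshift : shiftO ((h.symm y : ↥(OTW F₁)) : ℕ → Option A₁) ∈ OTW F₁ :=
      shiftO_mem_OTW (h.symm y).2
    have this1 := hconj.1 (h.symm y) hshift
    have h2 : (⟨shiftO ((h.symm y : ↥(OTW F₁)) : ℕ → Option A₁), hshift⟩ : ↥(OTW F₁))
        = h.symm ⟨shiftO (y : ℕ → Option A₂), hy⟩ := by
      apply h.injective
      rw [Homeomorph.apply_symm_apply]
      apply Subtype.ext
      rw [this1, Homeomorph.apply_symm_apply]
    rw [← h2]
  · intro y i
    have := hconj.2 (h.symm y) i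
    rw [Homeomorph.apply_symm_apply] at this
    exact this.symm

lemma h_sigT (hconj : IsConjugacy F₁ F₂ h) (y : ↥(OTW F₁)) :
    h (sigT F₁ y) = sigT F₂ (h y) :=
  Subtype.ext (hconj.1 y (shiftO_mem_OTW y.2))

lemma h_sigT_iter (hconj : IsConjugacy F₁ F₂ h) (k : ℕ) (y : ↥(OTW F₁)) :
    h ((sigT F₁)^[k] y) = (sigT F₂)^[k] (h y) := by
  induction k generalizing y with
  | zero => rfl
  | succ k ih =>
    rw [Function.iterate_succ_apply, Function.iterate_succ_apply, ih (sigT F₁ y),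
      h_sigT hconj y]

lemma h_no_none (hconj : IsConjugacy F₁ F₂ h) {y : ↥(OTW F₁)}
    (hy : ∀ i, (y : ℕ → Option A₁) i ≠ none) :
    ∀ i, ((h y : ↥(OTW F₂)) : ℕ → Option A₂) i ≠ none :=
  fun i hn => hy i ((hconj.2 y i).mp hn)

lemma h_ofSeq (hconj : IsConjugacy F₁ F₂ h) {x : ℕ → A₁} (hx : ofSeq x ∈ OTW F₁) :
    ∃ x₂ ∈ SubshiftOf F₂,
      ((h ⟨ofSeq x, hx⟩ : ↥(OTW F₂)) : ℕ → Option A₂) = ofSeq x₂ := by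
  apply otw_exists_seq (h ⟨ofSeq x, hx⟩).2
  exact h_no_none hconj (fun i => ofSeq_ne_none x i)

end Lib9
section Lib10

variable {A₁ A₂ : Type*} {F₁ : Set (List A₁)} {F₂ : Set (List A₂)}
  {h : ↥(OTW F₁) ≃ₜ ↥(OTW F₂)}

lemma covgen (hconj : IsConjugacy F₁ F₂ h) (γ : List A₁) (hγ : γ ∈ Lang F₁) :
    ∃ l : List (List A₂ × Finset A₂),
      (∀ p ∈ l, p.1 ∈ Lang F₂ ∧ γ.length ≤ p.1.length) ∧
      traceSet F₂ (⇑h '' cylT F₁ γ (∅ : Set A₁)) = ⋃ p ∈ l, Dset F₂ p.1 p.2 := by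
  have hcomp : IsCompact (⇑h '' cylT F₁ γ (∅ : Set A₁)) :=
    (isCompact_cylT_empty F₁ γ).image h.continuous
  have hopen : IsOpen (⇑h '' cylT F₁ γ (∅ : Set A₁)) :=
    h.isOpenMap _ (isOpen_cylT hγ Set.finite_empty)
  have hlen : ∀ y ∈ ⇑h '' cylT F₁ γ (∅ : Set A₁), ∀ j, j < γ.length →
      (y : ℕ → Option A₂) j ≠ none := by
    rintro y ⟨y', hy', rfl⟩ j hj hnone
    have := (hconj.2 y' j).mp hnone
    rw [(mem_cylT.mp hy').1 j hj] at this
    simp at this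
  obtain ⟨l, hl, hK⟩ := compact_open_cover hcomp hopen γ.length hlen
  refine ⟨l, hl, ?_⟩
  rw [hK, traceSet_biUnion]
  exact Set.iUnion_congr fun p => Set.iUnion_congr fun hp => traceSet_cylT F₂ p.1 p.2

lemma hbar_Cset_InU (hconj : IsConjugacy F₁ F₂ h) {α β : List A₁}
    (hα : α ∈ Lang F₁) (hβ : β ∈ Lang F₁) :
    InU F₂ (hbar F₁ F₂ ⇑h (Cset F₁ α β)) := by
  classical
  obtain ⟨x₀, hx₀⟩ := lang_nonemptyX hα
  obtain ⟨x₂₀, hx₂₀, _⟩ := h_ofSeq hconj (ofSeq_mem_OTW hx₀)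
  have hnil₂ : ([] : List A₂) ∈ Lang F₂ := nonemptyX_lang_nil hx₂₀
  obtain ⟨lβ, hlβ, hTβ⟩ := covgen hconj β hβ
  obtain ⟨lα, hlα, hTα⟩ := covgen hconj α hα
  set B : Set (ℕ → A₂) :=
    sseq α.length '' traceSet F₂ (⇑h '' cylT F₁ α (∅ : Set A₁)) with hB
  have hBeq : B = ⋃ p ∈ lα, Eset F₂ α.length p.1 p.2 := by
    rw [hB, hTα, Set.image_iUnion₂]
    exact Set.iUnion_congr fun p => Set.iUnion_congr fun hp =>
      (Eset_eq_image (hlα p hp).2 p.2).symm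
  have hInUB : InU F₂ B := by
    rw [hBeq]
    exact InU_list_biUnion hnil₂ _ _
      (fun p hp => InU_Eset (hlα p hp).1 (hlα p hp).2 p.2)
  have hME : hbar F₁ F₂ ⇑h (Cset F₁ α β)
      = traceSet F₂ (⇑h '' cylT F₁ β (∅ : Set A₁)) ∩ {z | sseq β.length z ∈ B} := by
    ext z
    simp only [hbar, Set.mem_setOf_eq, Set.mem_inter_iff]
    constructor
    · rintro ⟨y, ⟨s, hsC, hs_eq⟩, hz_eq⟩
      obtain ⟨x, hs_form, hβx, hαx⟩ := hsC
      obtain ⟨x₂, hx₂, hx₂eq⟩ := otw_exists_seq (h y).2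
        (by rw [← hz_eq]; exact ofSeq_ne_none z)
      have hz2 : z ∈ SubshiftOf F₂ := by
        have heq : ofSeq z = ofSeq x₂ := by rw [hz_eq, hx₂eq]
        rwa [ofSeq_injective heq]
      have hySβ : y ∈ cylT F₁ β (∅ : Set A₁) := by
        rw [mem_cylT]
        constructor
        · intro j hj
          rw [← hs_eq, hs_form]
          show some (wcat β x j) = some β[j]
          rw [wcat_lt β x hj]
        · intro a ha; simp at ha
      have hmemβ : (⟨ofSeq z, ofSeq_mem_OTW hz2⟩ : ↥(OTW F₂)) ∈ ⇑h '' cylT F₁ β ∅ :=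
        ⟨y, hySβ, Subtype.ext hz_eq.symm⟩
      have hαseq : ofSeq (wcat α x) ∈ OTW F₁ := ofSeq_mem_OTW hαx
      obtain ⟨z'', hz''X, hz''eq⟩ := h_ofSeq hconj hαseq
      have hyv : (y : ℕ → Option A₁) = ofSeq (wcat β x) := by rw [← hs_eq, hs_form]
      have e1 : (sigT F₁)^[α.length] ⟨ofSeq (wcat α x), hαseq⟩
          = (sigT F₁)^[β.length] y := by
        apply Subtype.ext
        rw [sigT_iter_ofSeq_val, sigT_iter_val, hyv, shiftO_iter_ofSeq,
          sseq_wcat, sseq_wcat]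
      have e2 := congrArg (fun t : ↥(OTW F₂) => (t : ℕ → Option A₂)) (congrArg h e1)
      rw [h_sigT_iter hconj, h_sigT_iter hconj] at e2
      rw [sigT_iter_val, sigT_iter_val, hz''eq, ← hz_eq, shiftO_iter_ofSeq,
        shiftO_iter_ofSeq] at e2
      have key : sseq α.length z'' = sseq β.length z := ofSeq_injective e2
      have hySα : (⟨ofSeq (wcat α x), hαseq⟩ : ↥(OTW F₁)) ∈ cylT F₁ α (∅ : Set A₁) := by
        rw [mem_cylT]
        constructor
        · intro j hj
          show some (wcat α x j) = some α[j]
          rw [wcat_lt α x hj]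
        · intro a ha; simp at ha
      have hmemα : z'' ∈ traceSet F₂ (⇑h '' cylT F₁ α (∅ : Set A₁)) :=
        ⟨hz''X, ⟨_, hySα, Subtype.ext hz''eq⟩⟩
      exact ⟨⟨hz2, hmemβ⟩, ⟨z'', hmemα, key⟩⟩
    · rintro ⟨⟨hz2, hmemβ⟩, hshift⟩
      obtain ⟨y1, hy1S, hy1e⟩ := hmemβ
      obtain ⟨z'', hmemα, hkey⟩ := hshift
      obtain ⟨hz''X, y2, hy2S, hy2e⟩ := hmemα
      have hv1 : (h y1 : ℕ → Option A₂) = ofSeq z := congrArg Subtype.val hy1e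
      have hv2 : (h y2 : ℕ → Option A₂) = ofSeq z'' := congrArg Subtype.val hy2e
      have hy1n : ∀ i, (y1 : ℕ → Option A₁) i ≠ none := by
        intro i hnone
        have : (h y1 : ℕ → Option A₂) i = none := (hconj.2 y1 i).mpr hnone
        rw [hv1] at this
        exact ofSeq_ne_none z i this
      have hy2n : ∀ i, (y2 : ℕ → Option A₁) i ≠ none := by
        intro i hnone
        have : (h y2 : ℕ → Option A₂) i = none := (hconj.2 y2 i).mpr hnone
        rw [hv2] at this
        exact ofSeq_ne_none z'' i this
      obtain ⟨s, hsX, hs_eq⟩ := otw_exists_seq y1.2 hy1n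
      obtain ⟨s', hs'X, hs'_eq⟩ := otw_exists_seq y2.2 hy2n
      have hsβ : StartsWith β s := by
        intro j hj
        have := (mem_cylT.mp hy1S).1 j hj
        rw [hs_eq] at this
        exact Option.some.inj this
      have hs'α : StartsWith α s' := by
        intro j hj
        have := (mem_cylT.mp hy2S).1 j hj
        rw [hs'_eq] at this
        exact Option.some.inj this
      have e1 : (sigT F₁)^[α.length] y2 = (sigT F₁)^[β.length] y1 := by
        apply h.injective
        rw [h_sigT_iter hconj, h_sigT_iter hconj]
        apply Subtype.ext
        rw [sigT_iter_val, sigT_iter_val, hv1, hv2, shiftO_iter_ofSeq,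
          shiftO_iter_ofSeq, hkey]
      have e2 := congrArg (fun t : ↥(OTW F₁) => (t : ℕ → Option A₁)) e1
      rw [sigT_iter_val, sigT_iter_val, hs_eq, hs'_eq, shiftO_iter_ofSeq,
        shiftO_iter_ofSeq] at e2
      have hxx : sseq α.length s' = sseq β.length s := ofSeq_injective e2
      refine ⟨y1, ⟨s, ?_, hs_eq.symm⟩, ?_⟩
      · rw [mem_Cset]
        refine ⟨hsX, hsβ, ?_⟩
        rw [← hxx, wcat_eq_self hs'α]
        exact hs'X
      · exact hv1.symm
  rw [hME, hTβ, Set.iUnion₂_inter]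
  apply InU_list_biUnion hnil₂
  intro p hp
  rw [Dset_inter_sseq (hlβ p hp).2 p.2 B]
  exact InU_Tset (lang_take (hlβ p hp).1 β.length)
    (InU.inter (InU_Dset (lang_drop (hlβ p hp).1 β.length) p.2) hInUB)

end Lib10
section Lib11

variable {A₁ A₂ : Type*} {F₁ : Set (List A₁)} {F₂ : Set (List A₂)}
  {h : ↥(OTW F₁) ≃ₜ ↥(OTW F₂)}

lemma conj_restricts (hconj : IsConjugacy F₁ F₂ h) (y : ↥(OTW F₁)) :
    (y : ℕ → Option A₁) ∈ ofSeq '' SubshiftOf F₁ ↔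
      (h y : ℕ → Option A₂) ∈ ofSeq '' SubshiftOf F₂ := by
  constructor
  · rintro ⟨x, hx, hxe⟩
    have hn : ∀ i, (y : ℕ → Option A₁) i ≠ none := by
      intro i
      rw [← hxe]
      apply ofSeq_ne_none
    obtain ⟨x₂, hx₂, he⟩ := otw_exists_seq (h y).2 (h_no_none hconj hn)
    exact ⟨x₂, hx₂, he.symm⟩
  · rintro ⟨x₂, hx₂, hxe⟩
    have hn2 : ∀ i, (h y : ℕ → Option A₂) i ≠ none := by
      intro i
      rw [← hxe]
      apply ofSeq_ne_none
    have hn : ∀ i, (y : ℕ → Option A₁) i ≠ none :=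
      fun i hni => hn2 i ((hconj.2 y i).mpr hni)
    obtain ⟨x, hx, he⟩ := otw_exists_seq y.2 hn
    exact ⟨x, hx, he.symm⟩

lemma hbar_union (S T : Set (ℕ → A₁)) :
    hbar F₁ F₂ ⇑h (S ∪ T) = hbar F₁ F₂ ⇑h S ∪ hbar F₁ F₂ ⇑h T := by
  ext z
  simp only [hbar, Set.mem_setOf_eq, Set.mem_union, Set.mem_image]
  constructor
  · rintro ⟨y, ⟨s, (hs | hs), he⟩, hz⟩
    · exact Or.inl ⟨y, ⟨s, hs, he⟩, hz⟩
    · exact Or.inr ⟨y, ⟨s, hs, he⟩, hz⟩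
  · rintro (⟨y, ⟨s, hs, he⟩, hz⟩ | ⟨y, ⟨s, hs, he⟩, hz⟩)
    · exact ⟨y, ⟨s, Or.inl hs, he⟩, hz⟩
    · exact ⟨y, ⟨s, Or.inr hs, he⟩, hz⟩

lemma hbar_inter (S T : Set (ℕ → A₁)) :
    hbar F₁ F₂ ⇑h (S ∩ T) = hbar F₁ F₂ ⇑h S ∩ hbar F₁ F₂ ⇑h T := by
  ext z
  simp only [hbar, Set.mem_setOf_eq, Set.mem_inter_iff, Set.mem_image]
  constructor
  · rintro ⟨y, ⟨s, ⟨hs1, hs2⟩, he⟩, hz⟩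
    exact ⟨⟨y, ⟨s, hs1, he⟩, hz⟩, ⟨y, ⟨s, hs2, he⟩, hz⟩⟩
  · rintro ⟨⟨y, ⟨s, hs, he⟩, hz⟩, ⟨y', ⟨s', hs', he'⟩, hz'⟩⟩
    have hyy : y = y' := h.injective (Subtype.ext (by rw [← hz, ← hz']))
    subst hyy
    have hss : s = s' := ofSeq_injective (by rw [he, he'])
    subst hss
    exact ⟨y, ⟨s, ⟨hs, hs'⟩, he⟩, hz⟩

lemma hbar_compl (hconj : IsConjugacy F₁ F₂ h) (S : Set (ℕ → A₁)) :
    hbar F₁ F₂ ⇑h (SubshiftOf F₁ \ S) = SubshiftOf F₂ \ hbar F₁ F₂ ⇑h S := by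
  ext z
  constructor
  · rintro ⟨y, ⟨x, ⟨hxX, hxS⟩, he⟩, hz⟩
    constructor
    · have : (h y : ℕ → Option A₂) ∈ ofSeq '' SubshiftOf F₂ :=
        (conj_restricts hconj y).mp ⟨x, hxX, he⟩
      obtain ⟨x₂, hx₂, he₂⟩ := this
      have : z = x₂ := ofSeq_injective (by rw [hz, ← he₂])
      rwa [this]
    · rintro ⟨y', ⟨x', hx', he'⟩, hz'⟩
      have hyy : y = y' := h.injective (Subtype.ext (by rw [← hz, ← hz']))
      subst hyy
      have : x = x' := ofSeq_injective (by rw [he, he'])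
      subst this
      exact hxS hx'
  · rintro ⟨hz2, hznot⟩
    set y := h.symm ⟨ofSeq z, ofSeq_mem_OTW hz2⟩ with hy
    have hyn : ∀ i, (y : ℕ → Option A₁) i ≠ none := by
      intro i hni
      have := (hconj.symm.2 (⟨ofSeq z, ofSeq_mem_OTW hz2⟩ : ↥(OTW F₂)) i).mp hni
      exact ofSeq_ne_none z i this
    obtain ⟨x, hxX, he⟩ := otw_exists_seq y.2 hyn
    have hhy : h y = ⟨ofSeq z, ofSeq_mem_OTW hz2⟩ := by
      rw [hy, Homeomorph.apply_symm_apply]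
    have hze : ofSeq z = (h y : ℕ → Option A₂) := (congrArg Subtype.val hhy).symm
    have hxS : x ∉ S := by
      intro hxS
      exact hznot ⟨y, ⟨x, hxS, he.symm⟩, hze⟩
    exact ⟨y, ⟨x, ⟨hxX, hxS⟩, he.symm⟩, hze⟩

lemma hbar_InU (hconj : IsConjugacy F₁ F₂ h) {S : Set (ℕ → A₁)} (hS : InU F₁ S) :
    InU F₂ (hbar F₁ F₂ ⇑h S) := by
  induction hS with
  | base hα hβ => exact hbar_Cset_InU hconj hα hβ
  | union _ _ ih1 ih2 => rw [hbar_union]; exact InU.union ih1 ih2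
  | inter _ _ ih1 ih2 => rw [hbar_inter]; exact InU.inter ih1 ih2
  | compl _ ih => rw [hbar_compl hconj]; exact InU.compl ih

lemma hbar_symm_cancel (hconj : IsConjugacy F₁ F₂ h) (T : Set (ℕ → A₂))
    (hT : T ⊆ SubshiftOf F₂) :
    hbar F₁ F₂ ⇑h (hbar F₂ F₁ ⇑h.symm T) = T := by
  ext z
  constructor
  · rintro ⟨y, ⟨s, ⟨y₂, ⟨t, ht, hte⟩, hse⟩, hse'⟩, hze⟩
    have hyy : y = h.symm y₂ := Subtype.ext (by rw [← hse', hse])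
    have : h y = y₂ := by rw [hyy, Homeomorph.apply_symm_apply]
    have hzt : ofSeq z = ofSeq t := by rw [hze, this, ← hte]
    rwa [ofSeq_injective hzt]
  · intro ht
    have ht2 := hT ht
    set y₂ : ↥(OTW F₂) := ⟨ofSeq z, ofSeq_mem_OTW ht2⟩ with hy₂
    have hyn : ∀ i, ((h.symm y₂ : ↥(OTW F₁)) : ℕ → Option A₁) i ≠ none := by
      intro i hni
      have := (hconj.symm.2 y₂ i).mp hni
      exact ofSeq_ne_none z i this
    obtain ⟨s, hsX, hse⟩ := otw_exists_seq (h.symm y₂).2 hyn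
    have hsmem : s ∈ hbar F₂ F₁ ⇑h.symm T := ⟨y₂, ⟨z, ht, rfl⟩, hse.symm⟩
    refine ⟨h.symm y₂, ⟨s, hsmem, hse.symm⟩, ?_⟩
    rw [Homeomorph.apply_symm_apply]

lemma hbar_inj {S T : Set (ℕ → A₁)} (hS : S ⊆ SubshiftOf F₁) (hconj : IsConjugacy F₁ F₂ h)
    (heq : hbar F₁ F₂ ⇑h S = hbar F₁ F₂ ⇑h T) (hT : T ⊆ SubshiftOf F₁) : S = T := by
  have key : ∀ (S' T' : Set (ℕ → A₁)), S' ⊆ SubshiftOf F₁ →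
      hbar F₁ F₂ ⇑h S' = hbar F₁ F₂ ⇑h T' → S' ⊆ T' := by
    intro S' T' hS' heq' x hx
    have hxX := hS' hx
    set y : ↥(OTW F₁) := ⟨ofSeq x, ofSeq_mem_OTW hxX⟩ with hydef
    obtain ⟨x₂, hx₂, he₂⟩ := h_ofSeq hconj (ofSeq_mem_OTW hxX)
    have hz : x₂ ∈ hbar F₁ F₂ ⇑h S' := ⟨y, ⟨x, hx, rfl⟩, he₂.symm⟩
    rw [heq'] at hz
    obtain ⟨y', ⟨t, htT, hte⟩, hze⟩ := hz
    have hyy : y' = y := h.injective (Subtype.ext (by rw [← hze, he₂]))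
    subst hyy
    have : ofSeq t = ofSeq x := hte
    rwa [← ofSeq_injective this]
  exact Set.Subset.antisymm (key S T hS heq) (key T S hT heq.symm)

end Lib11


theorem conjugacy_restricts_and_boolean_iso {A₁ A₂ : Type*}
    (F₁ : Set (List A₁)) (F₂ : Set (List A₂))
    (h : ↥(OTW F₁) ≃ₜ ↥(OTW F₂)) (hconj : IsConjugacy F₁ F₂ h) :
    (∀ y : ↥(OTW F₁), (y : ℕ → Option A₁) ∈ ofSeq '' SubshiftOf F₁ ↔
        (h y : ℕ → Option A₂) ∈ ofSeq '' SubshiftOf F₂) ∧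
    (∀ S : Set (ℕ → A₁), InU F₁ S → InU F₂ (hbar F₁ F₂ ⇑h S)) ∧
    (∀ S T : Set (ℕ → A₁), InU F₁ S → InU F₁ T →
      hbar F₁ F₂ ⇑h (S ∪ T) = hbar F₁ F₂ ⇑h S ∪ hbar F₁ F₂ ⇑h T ∧
      hbar F₁ F₂ ⇑h (S ∩ T) = hbar F₁ F₂ ⇑h S ∩ hbar F₁ F₂ ⇑h T ∧
      hbar F₁ F₂ ⇑h (SubshiftOf F₁ \ S) = SubshiftOf F₂ \ hbar F₁ F₂ ⇑h S) ∧
    ∀ T : Set (ℕ → A₂), InU F₂ T →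
      ∃! S : Set (ℕ → A₁), InU F₁ S ∧ hbar F₁ F₂ ⇑h S = T := by
  refine ⟨conj_restricts hconj, fun S hS => hbar_InU hconj hS,
    fun S T _ _ => ⟨hbar_union S T, hbar_inter S T, hbar_compl hconj S⟩, ?_⟩
  intro T hT
  refine ⟨hbar F₂ F₁ ⇑h.symm T,
    ⟨hbar_InU hconj.symm hT, hbar_symm_cancel hconj T (InU_subset hT)⟩, ?_⟩
  rintro S' ⟨hS', he'⟩
  exact hbar_inj (InU_subset hS') hconj
    (he'.trans (hbar_symm_cancel hconj T (InU_subset hT)).symm)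
    (InU_subset (hbar_InU hconj.symm hT))
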